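/- With the Zhelobenko operators R_{kl} = ∂_{kl} + ∑_{j>l} z_{lj}∂_{kj} acting on polynomials in the entries z_{ij} (i<j) of a generic upper unitriangular matrix Z, and Φ any determinant of a matrix consisting of some rows of Z (indexed by a set I) and constant rows: R_{kl}² Φ = 0 for all k < l. -/

import Mathlib

open MvPolynomial

/-- Polynomials in the entries `z_{ij}` (1-based indices) of a generic matrix. -/
abbrev Pz : Type := MvPolynomial (ℕ × ℕ) ℂ

/-- The variable `z_{ij}`. -/
noncomputable def zv (i j : ℕ) : Pz := X (i, j)

/-- The `j`-th entry of the `i`-th row (1-based) of the generic upper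
unitriangular matrix `Z`: `(0, …, 0, 1, z_{i(i+1)}, …)`. -/
noncomputable def Zrow (i j : ℕ) : Pz :=
  if i = j then 1 else if i < j then zv i j else 0

/-- The Zhelobenko operator `R_{kl} = ∂_{kl} + ∑_{j>l} z_{lj} ∂_{kj}` on
polynomials in the entries of the generic upper unitriangular `N × N` matrix. -/
noncomputable def Rz (N k l : ℕ) (p : Pz) : Pz :=
  pderiv (k, l) p + ∑ j ∈ Finset.Icc (l + 1) N, zv l j * pderiv (k, j) p

/-- The `N × N` matrix whose first `s` rows are the rows of the generic upper
unitriangular matrix `Z` with (1-based) indices `e 0, …, e (s-1)`, and whose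
remaining `t` rows are constant rows `c`. -/
noncomputable def ZconstMat (N s t : ℕ) (hst : s + t = N) (e : Fin s → ℕ)
    (c : Fin t → Fin N → ℂ) : Matrix (Fin N) (Fin N) Pz :=
  Matrix.of fun a b =>
    if h : (a : ℕ) < s then Zrow (e ⟨a, h⟩) ((b : ℕ) + 1)
    else MvPolynomial.C (c ⟨(a : ℕ) - s, by have := a.isLt; omega⟩ b)

/-- The Zhelobenko operator as a derivation. -/
noncomputable def Dz (N k l : ℕ) : Derivation ℂ Pz Pz :=
  pderiv (k, l) + ∑ j ∈ Finset.Icc (l + 1) N, zv l j • pderiv (k, j)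

lemma Dz_apply (N k l : ℕ) (p : Pz) : Dz N k l p = Rz N k l p := by
  have h : ∀ (s : Finset ℕ), ((∑ j ∈ s, zv l j • pderiv (k, j) : Derivation ℂ Pz Pz)) p
      = ∑ j ∈ s, zv l j * pderiv (k, j) p := by
    intro s
    induction s using Finset.induction_on with
    | empty => simp
    | insert _ _ ha ih =>
      rw [Finset.sum_insert ha, Finset.sum_insert ha, ← ih]
      simp [smul_eq_mul]
  rw [Dz, Rz]
  simp only [Derivation.coe_add, Pi.add_apply, h]

lemma deriv_prod {ι : Type*} [DecidableEq ι] (D : Derivation ℂ Pz Pz) (s : Finset ι)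
    (f : ι → Pz) :
    D (∏ i ∈ s, f i) = ∑ i ∈ s, (∏ j ∈ s.erase i, f j) * D (f i) := by
  induction s using Finset.induction_on with
  | empty => simp
  | @insert a s ha ih =>
    rw [Finset.prod_insert ha, D.leibniz, smul_eq_mul, smul_eq_mul, ih, Finset.mul_sum,
      Finset.sum_insert ha, Finset.erase_insert ha, add_comm]
    congr 1
    refine Finset.sum_congr rfl fun i hi => ?_
    rw [Finset.erase_insert_of_ne (by rintro rfl; exact ha hi),
      Finset.prod_insert (fun h => ha (Finset.mem_of_mem_erase h)), mul_assoc]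

lemma deriv_det {n : ℕ} (D : Derivation ℂ Pz Pz) (M : Matrix (Fin n) (Fin n) Pz) :
    D M.det = ∑ i, (M.updateRow i (fun j => D (M i j))).det := by
  have hu : ∀ (u : ℤˣ) (x : Pz), D (u • x) = u • D x := by
    intro u x
    rw [Units.smul_def, Units.smul_def]
    exact map_zsmul D (u : ℤ) x
  simp only [Matrix.det_apply]
  rw [map_sum, Finset.sum_comm]
  refine Finset.sum_congr rfl fun σ _ => ?_
  rw [hu, deriv_prod, ← Finset.smul_sum]
  congr 1
  rw [← Equiv.sum_comp σ (fun i => ∏ j, (M.updateRow i fun b => D (M i b)) (σ j) j)]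
  refine Finset.sum_congr rfl fun i _ => ?_
  rw [← Finset.mul_prod_erase Finset.univ _ (Finset.mem_univ i), Matrix.updateRow_self,
    mul_comm]
  congr 1
  refine Finset.prod_congr rfl fun j hj => ?_
  rw [Matrix.updateRow_ne (σ.injective.ne (Finset.ne_of_mem_erase hj))]

lemma pderiv_Zrow_ne (a b i j : ℕ) (hne : ((i, j) : ℕ × ℕ) ≠ (a, b)) :
    (pderiv (a, b) (Zrow i j) : Pz) = 0 := by
  unfold Zrow zv
  by_cases h1 : i = j
  · rw [if_pos h1]; exact (pderiv (a, b)).map_one_eq_zero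
  · rw [if_neg h1]
    by_cases h2 : i < j
    · rw [if_pos h2]; exact pderiv_X_of_ne hne
    · rw [if_neg h2]; exact map_zero _

lemma Dz_C (N k l : ℕ) (x : ℂ) : Dz N k l (C x) = 0 := by
  rw [Dz_apply]; simp [Rz, pderiv_C]

lemma Dz_Zrow_ne (N k l i j : ℕ) (hik : i ≠ k) : Dz N k l (Zrow i j) = 0 := by
  have hp : ∀ m : ℕ, (pderiv (k, m) (Zrow i j) : Pz) = 0 := fun m =>
    pderiv_Zrow_ne k m i j (by simp only [ne_eq, Prod.mk.injEq, not_and]; omega)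
  rw [Dz_apply]; simp [Rz, hp]

lemma Dz_Zrow_k (N k l j : ℕ) (hkl : k < l) (hl : l ≤ N) (hj : j ≤ N) :
    Dz N k l (Zrow k j) = Zrow l j := by
  rw [Dz_apply, Rz]
  rcases lt_trichotomy j l with h | h | h
  · have h1 : (pderiv (k, l) (Zrow k j) : Pz) = 0 :=
      pderiv_Zrow_ne k l k j (by simp only [ne_eq, Prod.mk.injEq, not_and]; omega)
    have h2 : ∀ m ∈ Finset.Icc (l + 1) N, zv l m * (pderiv (k, m) (Zrow k j) : Pz) = 0 := by
      intro m hm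
      simp only [Finset.mem_Icc] at hm
      have hz : (pderiv (k, m) (Zrow k j) : Pz) = 0 :=
        pderiv_Zrow_ne k m k j (by simp only [ne_eq, Prod.mk.injEq, not_and]; omega)
      rw [hz, mul_zero]
    rw [h1, Finset.sum_eq_zero h2, add_zero]
    unfold Zrow
    rw [if_neg (by omega), if_neg (by omega)]
  · subst h
    have h1 : (pderiv (k, j) (Zrow k j) : Pz) = 1 := by
      unfold Zrow zv
      rw [if_neg (by omega), if_pos hkl]
      exact pderiv_X_self _
    have h2 : ∀ m ∈ Finset.Icc (j + 1) N, zv j m * (pderiv (k, m) (Zrow k j) : Pz) = 0 := by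
      intro m hm
      simp only [Finset.mem_Icc] at hm
      have hz : (pderiv (k, m) (Zrow k j) : Pz) = 0 :=
        pderiv_Zrow_ne k m k j (by simp only [ne_eq, Prod.mk.injEq, not_and]; omega)
      rw [hz, mul_zero]
    rw [h1, Finset.sum_eq_zero h2, add_zero]
    unfold Zrow
    rw [if_pos rfl]
  · have h1 : (pderiv (k, l) (Zrow k j) : Pz) = 0 := by
      unfold Zrow zv
      rw [if_neg (by omega), if_pos (by omega)]
      exact pderiv_X_of_ne (by simp only [ne_eq, Prod.mk.injEq, not_and]; omega)
    have h3 : (pderiv (k, j) (Zrow k j) : Pz) = 1 := by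
      unfold Zrow zv
      rw [if_neg (by omega), if_pos (by omega)]
      exact pderiv_X_self _
    rw [h1, zero_add,
      Finset.sum_eq_single_of_mem j (by simp only [Finset.mem_Icc]; omega)
        (fun m hm hne => by
          have hz : (pderiv (k, m) (Zrow k j) : Pz) = 0 :=
            pderiv_Zrow_ne k m k j (by simp only [ne_eq, Prod.mk.injEq, not_and]; omega)
          rw [hz, mul_zero]),
      h3, mul_one]
    unfold Zrow
    rw [if_neg (by omega), if_pos h]

/-- square-nilpotency of the Zhelobenko operators on determinants
built from rows of the generic unipotent matrix `Z` (indexed by the strictly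
monotone `e`) together with constant rows: `R_{kl}² Φ = 0` for all `k < l`. -/
theorem zhelobenko_sq_zero (N s t : ℕ) (hst : s + t = N)
    (e : Fin s → ℕ) (he : StrictMono e) (hbound : ∀ a, 1 ≤ e a ∧ e a ≤ N)
    (c : Fin t → Fin N → ℂ) (k l : ℕ) (hk : 1 ≤ k) (hkl : k < l) (hl : l ≤ N) :
    Rz N k l (Rz N k l (ZconstMat N s t hst e c).det) = 0 := by
  set M := ZconstMat N s t hst e c with hM
  have F1 : ∀ (a b : Fin N), (¬ ∃ h : (a : ℕ) < s, e ⟨a, h⟩ = k) →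
      Dz N k l (M a b) = 0 := by
    intro a b hna
    by_cases h : (a : ℕ) < s
    · have hek : e ⟨a, h⟩ ≠ k := fun hc => hna ⟨h, hc⟩
      have hval : M a b = Zrow (e ⟨a, h⟩) ((b : ℕ) + 1) := by
        simp only [hM, ZconstMat, Matrix.of_apply]; rw [dif_pos h]
      rw [hval]
      exact Dz_Zrow_ne _ _ _ _ _ hek
    · have hval : M a b = C (c ⟨(a : ℕ) - s, by have := a.isLt; omega⟩ b) := by
        simp only [hM, ZconstMat, Matrix.of_apply]; rw [dif_neg h]
      rw [hval, Dz_C]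
  have F2 : ∀ (a b : Fin N), Dz N k l (Dz N k l (M a b)) = 0 := by
    intro a b
    by_cases hp : ∃ h : (a : ℕ) < s, e ⟨a, h⟩ = k
    · obtain ⟨h, hk'⟩ := hp
      have hval : M a b = Zrow k ((b : ℕ) + 1) := by
        simp only [hM, ZconstMat, Matrix.of_apply]; rw [dif_pos h, hk']
      rw [hval, Dz_Zrow_k N k l _ hkl hl (by have := b.isLt; omega),
        Dz_Zrow_ne N k l l _ (by omega)]
    · rw [F1 a b hp, map_zero]
  rw [← Dz_apply, ← Dz_apply, deriv_det, map_sum]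
  refine Finset.sum_eq_zero fun a _ => ?_
  rw [deriv_det]
  refine Finset.sum_eq_zero fun b _ => ?_
  by_cases hab : b = a
  · subst hab
    apply Matrix.det_eq_zero_of_row_eq_zero b
    intro j
    simp only [Matrix.updateRow_self]
    exact F2 b j
  · by_cases hpb : ∃ h : (b : ℕ) < s, e ⟨b, h⟩ = k
    · have hpa : ¬ ∃ h : (a : ℕ) < s, e ⟨a, h⟩ = k := by
        rintro ⟨ha', hka⟩
        obtain ⟨hb', hkb⟩ := hpb
        have heq : (⟨(a : ℕ), ha'⟩ : Fin s) = ⟨(b : ℕ), hb'⟩ :=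
          he.injective (hka.trans hkb.symm)
        exact hab (Fin.ext (congrArg Fin.val heq).symm)
      apply Matrix.det_eq_zero_of_row_eq_zero a
      intro j
      rw [Matrix.updateRow_ne (show a ≠ b from fun h => hab h.symm),
        Matrix.updateRow_self]
      exact F1 a j hpa
    · apply Matrix.det_eq_zero_of_row_eq_zero b
      intro j
      rw [Matrix.updateRow_self, Matrix.updateRow_ne hab]
      exact F1 b j hpb
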